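/- In the algebra ([0,1], min, max, ∼, →_FT) with ∼x = 1 - x and x →_FT y = max(1-x, y) if x ≤ y, else 0, the Δ operator is definable as Δ(x) = 1 →_FT x, i.e. for all x ∈ [0,1], 1 →_FT x = 1 if x = 1 and 1 →_FT x = 0 otherwise; moreover, Gödel implication is definable as x ⇒_G y = max(∼Δ(∼(x →_FT y)), y). -/
import Mathlib


noncomputable def Gimp (x y : ℝ) : ℝ := if x ≤ y then 1 else y

noncomputable def delta (x : ℝ) : ℝ := if x = 1 then 1 else 0

noncomputable def FTimp (x y : ℝ) : ℝ := if x ≤ y then max (1 - x) y else 0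

theorem delta_and_godel_from_ft :
    (∀ x ∈ Set.Icc (0:ℝ) 1, FTimp 1 x = delta x) ∧
    (∀ x ∈ Set.Icc (0:ℝ) 1, ∀ y ∈ Set.Icc (0:ℝ) 1,
      Gimp x y = max (1 - delta (1 - FTimp x y)) y) := by
  constructor
  · rintro x ⟨hx0, hx1⟩
    unfold FTimp delta
    rcases eq_or_lt_of_le hx1 with h | h
    · simp [h.symm, hx0]
    · rw [if_neg (not_le.mpr h), if_neg (ne_of_lt h)]
  · rintro x ⟨hx0, hx1⟩ y ⟨hy0, hy1⟩
    unfold FTimp delta Gimp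
    rcases le_or_gt x y with h | h
    · rw [if_pos h, if_pos h]
      have hpos : (0:ℝ) < max (1 - x) y := by
        rcases lt_or_ge x 1 with hx | hx
        · exact lt_max_of_lt_left (by linarith)
        · exact lt_max_of_lt_right (by linarith)
      rw [if_neg (by linarith : (1:ℝ) - max (1 - x) y ≠ 1)]
      rw [max_eq_left (by linarith : y ≤ 1 - 0)]; norm_num
    · rw [if_neg (not_le.mpr h), if_neg (not_le.mpr h)]
      norm_num
      exact hy0
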